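/- Let G_1 and G_2 be finite twin-free graphs such that each of them has the property that every minimum separating set S admits an S-universal vertex. If the join G_1 ∨ G_2 is twin-free, then the minimum size of a separating set of G_1 ∨ G_2 equals γ^S(G_1) + γ^S(G_2) + 1; furthermore every separating set of G_1 ∨ G_2 of this size admits an S-universal vertex. -/

import Mathlib

open SimpleGraph

/-- The closed ball of radius 1 (closed neighborhood) of `x`. -/
def ball {V : Type*} (G : SimpleGraph V) (x : V) : Set V := {y | y = x ∨ G.Adj x y}

/-- `C` separates every pair of distinct vertices. -/
def IsSeparating {V : Type*} (G : SimpleGraph V) (C : Set V) : Prop :=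
  ∀ x y : V, x ≠ y → _root_.ball G x ∩ C ≠ _root_.ball G y ∩ C

/-- `C` is an identifying code of `G`. -/
def IsIdCode {V : Type*} (G : SimpleGraph V) (C : Set V) : Prop :=
  (∀ x : V, (_root_.ball G x ∩ C).Nonempty) ∧ IsSeparating G C

/-- A graph is twin-free if distinct vertices have distinct closed neighborhoods. -/
def TwinFree {V : Type*} (G : SimpleGraph V) : Prop :=
  ∀ x y : V, _root_.ball G x = _root_.ball G y → x = y

/-- The minimum size of an identifying code. -/
noncomputable def gammaID {V : Type*} (G : SimpleGraph V) : ℕ :=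
  sInf {n | ∃ C : Set V, IsIdCode G C ∧ C.ncard = n}

/-- The minimum size of a separating set. -/
noncomputable def gammaS {V : Type*} (G : SimpleGraph V) : ℕ :=
  sInf {n | ∃ C : Set V, IsSeparating G C ∧ C.ncard = n}

/-- The graph `A_k` on vertices `x_1,…,x_{2k}` (indexed `0,…,2k-1`):
`x_i` adjacent to `x_j` iff `i ≠ j` and `|i - j| ≤ k - 1`. -/
def Agraph (k : ℕ) : SimpleGraph (Fin (2 * k)) where
  Adj i j := i ≠ j ∧ ((i : ℤ) - (j : ℤ)).natAbs ≤ k - 1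
  symm := ⟨by
    intro i j h
    refine ⟨h.1.symm, ?_⟩
    have : ((j : ℤ) - (i : ℤ)).natAbs = ((i : ℤ) - (j : ℤ)).natAbs := by
      rw [← Int.natAbs_neg]; ring_nf
    omega⟩
  loopless := ⟨by intro i h; exact h.1 rfl⟩

/-- The join of two graphs. -/
def joinG {α β : Type*} (G₁ : SimpleGraph α) (G₂ : SimpleGraph β) : SimpleGraph (α ⊕ β) where
  Adj x y := match x, y with
    | Sum.inl a, Sum.inl b => G₁.Adj a b
    | Sum.inr a, Sum.inr b => G₂.Adj a b
    | _, _ => True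
  symm := ⟨by rintro (a | a) (b | b) h <;> first | exact h.symm | trivial⟩
  loopless := ⟨by
    rintro (a | a) h
    · exact G₁.loopless.irrefl _ h
    · exact G₂.loopless.irrefl _ h⟩

/-- The star `K_{1,t}`: vertex `0` is the center, adjacent to all other vertices. -/
def starGraph (t : ℕ) : SimpleGraph (Fin (t + 1)) where
  Adj i j := i ≠ j ∧ (i = 0 ∨ j = 0)
  symm := ⟨by rintro i j ⟨h1, h2⟩; exact ⟨h1.symm, h2.symm⟩⟩
  loopless := ⟨by rintro i ⟨h1, _⟩; exact h1 rfl⟩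


section Helpers

variable {V₁ V₂ : Type*} {G₁ : SimpleGraph V₁} {G₂ : SimpleGraph V₂}

@[simp] lemma mem_ball_iff {V : Type*} {G : SimpleGraph V} {x y : V} :
    y ∈ _root_.ball G x ↔ y = x ∨ G.Adj x y := Iff.rfl

@[simp] lemma joinG_adj_inl_inl {a b : V₁} :
    (joinG G₁ G₂).Adj (Sum.inl a) (Sum.inl b) ↔ G₁.Adj a b := Iff.rfl
@[simp] lemma joinG_adj_inl_inr {a : V₁} {b : V₂} :
    (joinG G₁ G₂).Adj (Sum.inl a) (Sum.inr b) := trivial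
@[simp] lemma joinG_adj_inr_inl {a : V₂} {b : V₁} :
    (joinG G₁ G₂).Adj (Sum.inr a) (Sum.inl b) := trivial
@[simp] lemma joinG_adj_inr_inr {a b : V₂} :
    (joinG G₁ G₂).Adj (Sum.inr a) (Sum.inr b) ↔ G₂.Adj a b := Iff.rfl

@[simp] lemma mem_ballJ_inl_inl {a x : V₁} :
    (Sum.inl x : V₁ ⊕ V₂) ∈ _root_.ball (joinG G₁ G₂) (Sum.inl a) ↔ x ∈ _root_.ball G₁ a := by
  simp [_root_.ball]
@[simp] lemma mem_ballJ_inl_inr {a : V₁} {y : V₂} :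
    (Sum.inr y : V₁ ⊕ V₂) ∈ _root_.ball (joinG G₁ G₂) (Sum.inl a) := by
  simp [_root_.ball]
@[simp] lemma mem_ballJ_inr_inl {b : V₂} {x : V₁} :
    (Sum.inl x : V₁ ⊕ V₂) ∈ _root_.ball (joinG G₁ G₂) (Sum.inr b) := by
  simp [_root_.ball]
@[simp] lemma mem_ballJ_inr_inr {b y : V₂} :
    (Sum.inr y : V₁ ⊕ V₂) ∈ _root_.ball (joinG G₁ G₂) (Sum.inr b) ↔ y ∈ _root_.ball G₂ b := by
  simp [_root_.ball]

lemma sep_mono {V : Type*} {G : SimpleGraph V} {C C' : Set V}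
    (h : IsSeparating G C) (hcc : C ⊆ C') : IsSeparating G C' := by
  intro x y hxy he
  apply h x y hxy
  ext z
  constructor
  · rintro ⟨hb, hc⟩
    exact ⟨((Set.ext_iff.mp he z).mp ⟨hb, hcc hc⟩).1, hc⟩
  · rintro ⟨hb, hc⟩
    exact ⟨((Set.ext_iff.mp he z).mpr ⟨hb, hcc hc⟩).1, hc⟩

lemma univ_sep {V : Type*} {G : SimpleGraph V} (h : TwinFree G) :
    IsSeparating G Set.univ := by
  intro x y hxy he
  simp only [Set.inter_univ] at he
  exact hxy (h x y he)

lemma gammaS_le {V : Type*} {G : SimpleGraph V} {C : Set V} (hC : IsSeparating G C) :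
    gammaS G ≤ C.ncard := Nat.sInf_le ⟨C, hC, rfl⟩

lemma gammaS_exists {V : Type*} [Fintype V] {G : SimpleGraph V} (h : TwinFree G) :
    ∃ C : Set V, IsSeparating G C ∧ C.ncard = gammaS G := by
  have hne : {n | ∃ C : Set V, IsSeparating G C ∧ C.ncard = n}.Nonempty :=
    ⟨_, Set.univ, univ_sep h, rfl⟩
  exact Nat.sInf_mem hne

lemma sep_join_iff {S : Set (V₁ ⊕ V₂)} :
    IsSeparating (joinG G₁ G₂) S ↔
      IsSeparating G₁ (Sum.inl ⁻¹' S) ∧ IsSeparating G₂ (Sum.inr ⁻¹' S) ∧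
      ¬((∃ a, Sum.inl ⁻¹' S ⊆ _root_.ball G₁ a) ∧ (∃ b, Sum.inr ⁻¹' S ⊆ _root_.ball G₂ b)) := by
  constructor
  · intro h
    refine ⟨?_, ?_, ?_⟩
    · intro x y hxy he
      apply h (Sum.inl x) (Sum.inl y) (by simp [hxy])
      ext z
      cases z with
      | inl c =>
        have h' := Set.ext_iff.mp he c
        simp only [Set.mem_inter_iff, Set.mem_preimage] at h'
        simp only [Set.mem_inter_iff, mem_ballJ_inl_inl]
        exact h'
      | inr c => simp
    · intro x y hxy he
      apply h (Sum.inr x) (Sum.inr y) (by simp [hxy])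
      ext z
      cases z with
      | inl c => simp
      | inr c =>
        have h' := Set.ext_iff.mp he c
        simp only [Set.mem_inter_iff, Set.mem_preimage] at h'
        simp only [Set.mem_inter_iff, mem_ballJ_inr_inr]
        exact h'
    · rintro ⟨⟨a, ha⟩, ⟨b, hb⟩⟩
      apply h (Sum.inl a) (Sum.inr b) (by simp)
      ext z
      cases z with
      | inl c =>
        simp only [Set.mem_inter_iff, mem_ballJ_inl_inl, mem_ballJ_inr_inl, true_and]
        exact ⟨fun ⟨_, hc⟩ => hc, fun hc => ⟨ha hc, hc⟩⟩
      | inr c =>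
        simp only [Set.mem_inter_iff, mem_ballJ_inl_inr, mem_ballJ_inr_inr, true_and]
        exact ⟨fun hc => ⟨hb hc, hc⟩, fun ⟨_, hc⟩ => hc⟩
  · rintro ⟨h1, h2, h3⟩ x y hxy he
    cases x with
    | inl x =>
      cases y with
      | inl y =>
        apply h1 x y (by simpa using hxy)
        ext c
        have h' := Set.ext_iff.mp he (Sum.inl c)
        simp only [Set.mem_inter_iff, mem_ballJ_inl_inl] at h'
        simp only [Set.mem_inter_iff, Set.mem_preimage]
        exact h'
      | inr y =>
        apply h3
        constructor
        · exact ⟨x, fun c hc => mem_ballJ_inl_inl.mp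
            ((Set.ext_iff.mp he (Sum.inl c)).mpr ⟨mem_ballJ_inr_inl, hc⟩).1⟩
        · exact ⟨y, fun c hc => mem_ballJ_inr_inr.mp
            ((Set.ext_iff.mp he (Sum.inr c)).mp ⟨mem_ballJ_inl_inr, hc⟩).1⟩
    | inr x =>
      cases y with
      | inl y =>
        apply h3
        constructor
        · exact ⟨y, fun c hc => mem_ballJ_inl_inl.mp
            ((Set.ext_iff.mp he (Sum.inl c)).mp ⟨mem_ballJ_inr_inl, hc⟩).1⟩
        · exact ⟨x, fun c hc => mem_ballJ_inr_inr.mp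
            ((Set.ext_iff.mp he (Sum.inr c)).mpr ⟨mem_ballJ_inl_inr, hc⟩).1⟩
      | inr y =>
        apply h2 x y (by simpa using hxy)
        ext c
        have h' := Set.ext_iff.mp he (Sum.inr c)
        simp only [Set.mem_inter_iff, mem_ballJ_inr_inr] at h'
        simp only [Set.mem_inter_iff, Set.mem_preimage]
        exact h'

lemma ncard_sum_split [Fintype V₁] [Fintype V₂] (S : Set (V₁ ⊕ V₂)) :
    S.ncard = (Sum.inl ⁻¹' S).ncard + (Sum.inr ⁻¹' S).ncard := by
  have hS : S = Sum.inl '' (Sum.inl ⁻¹' S) ∪ Sum.inr '' (Sum.inr ⁻¹' S) := by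
    ext (x | x) <;> simp
  have hd : Disjoint (Sum.inl '' (Sum.inl ⁻¹' S)) (Sum.inr '' (Sum.inr ⁻¹' S) : Set (V₁ ⊕ V₂)) := by
    rw [Set.disjoint_left]
    rintro _ ⟨a, _, rfl⟩ ⟨b, _, h⟩
    exact absurd h (by simp)
  calc S.ncard = (Sum.inl '' (Sum.inl ⁻¹' S) ∪ Sum.inr '' (Sum.inr ⁻¹' S)).ncard := by
        rw [← hS]
    _ = (Sum.inl ⁻¹' S).ncard + (Sum.inr ⁻¹' S).ncard := by
        rw [Set.ncard_union_eq hd, Set.ncard_image_of_injective _ Sum.inl_injective,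
          Set.ncard_image_of_injective _ Sum.inr_injective]

lemma no_double_universal (hTF : TwinFree (joinG G₁ G₂)) :
    (∀ a : V₁, ∃ v, v ∉ _root_.ball G₁ a) ∨ (∀ b : V₂, ∃ v, v ∉ _root_.ball G₂ b) := by
  by_contra h
  push_neg at h
  obtain ⟨⟨a, ha⟩, ⟨b, hb⟩⟩ := h
  have : (Sum.inl a : V₁ ⊕ V₂) = Sum.inr b :=
    hTF _ _ (by
      ext (x | x)
      · simpa using ha x
      · simpa using hb x)
  exact absurd this (by simp)

lemma breaker {V : Type*} {G : SimpleGraph V} {C : Set V} (hC : IsSeparating G C)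
    {w : V} (hw : C ⊆ _root_.ball G w) {v : V} (hv : v ∉ _root_.ball G w) :
    v ∉ C ∧ ¬∃ u, insert v C ⊆ _root_.ball G u := by
  refine ⟨fun h => hv (hw h), ?_⟩
  rintro ⟨u, hu⟩
  have hCu : C ⊆ _root_.ball G u := fun c hc => hu (Set.mem_insert_of_mem _ hc)
  by_cases huw : u = w
  · exact hv (huw ▸ hu (Set.mem_insert _ _))
  · apply hC u w huw
    rw [Set.inter_eq_self_of_subset_right hCu, Set.inter_eq_self_of_subset_right hw]

end Helpers
theorem stmt9 {V₁ V₂ : Type*} [Fintype V₁] [Fintype V₂]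
    (G₁ : SimpleGraph V₁) (G₂ : SimpleGraph V₂)
    (hTF₁ : TwinFree G₁) (hTF₂ : TwinFree G₂)
    (huniv₁ : ∀ S : Set V₁, IsSeparating G₁ S →
      (∀ S' : Set V₁, IsSeparating G₁ S' → S.ncard ≤ S'.ncard) → ∃ x, S ⊆ ball G₁ x)
    (huniv₂ : ∀ S : Set V₂, IsSeparating G₂ S →
      (∀ S' : Set V₂, IsSeparating G₂ S' → S.ncard ≤ S'.ncard) → ∃ x, S ⊆ ball G₂ x)
    (hTF : TwinFree (joinG G₁ G₂)) :
    gammaS (joinG G₁ G₂) = gammaS G₁ + gammaS G₂ + 1 ∧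
    ∀ S : Set (V₁ ⊕ V₂), IsSeparating (joinG G₁ G₂) S →
      S.ncard = gammaS G₁ + gammaS G₂ + 1 → ∃ x, S ⊆ ball (joinG G₁ G₂) x := by
  obtain ⟨C₁, hC₁, hc₁⟩ := gammaS_exists hTF₁
  obtain ⟨C₂, hC₂, hc₂⟩ := gammaS_exists hTF₂
  -- lower bound
  have lower : ∀ S : Set (V₁ ⊕ V₂), IsSeparating (joinG G₁ G₂) S →
      gammaS G₁ + gammaS G₂ + 1 ≤ S.ncard := by
    intro S hS
    obtain ⟨h1, h2, h3⟩ := sep_join_iff.mp hS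
    have hn := ncard_sum_split S
    have g1 : gammaS G₁ ≤ (Sum.inl ⁻¹' S).ncard := gammaS_le h1
    have g2 : gammaS G₂ ≤ (Sum.inr ⁻¹' S).ncard := gammaS_le h2
    by_contra hcon
    have e1 : (Sum.inl ⁻¹' S).ncard = gammaS G₁ := by omega
    have e2 : (Sum.inr ⁻¹' S).ncard = gammaS G₂ := by omega
    apply h3
    constructor
    · exact huniv₁ _ h1 (fun S' hS' => le_trans (le_of_eq e1) (gammaS_le hS'))
    · exact huniv₂ _ h2 (fun S' hS' => le_trans (le_of_eq e2) (gammaS_le hS'))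
  -- upper bound construction
  have upper : ∃ S : Set (V₁ ⊕ V₂), IsSeparating (joinG G₁ G₂) S ∧
      S.ncard = gammaS G₁ + gammaS G₂ + 1 := by
    rcases no_double_universal hTF with hk | hk
    · obtain ⟨w, hw⟩ := huniv₁ C₁ hC₁ (fun S' hS' => le_trans (le_of_eq hc₁) (gammaS_le hS'))
      obtain ⟨v, hv⟩ := hk w
      obtain ⟨hvC, hnu⟩ := breaker hC₁ hw hv
      have hp1 : Sum.inl ⁻¹' (Sum.inl '' insert v C₁ ∪ Sum.inr '' C₂) = insert v C₁ := by
        ext c; simp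
      have hp2 : Sum.inr ⁻¹' (Sum.inl '' insert v C₁ ∪ Sum.inr '' C₂) = C₂ := by
        ext c; simp
      refine ⟨Sum.inl '' insert v C₁ ∪ Sum.inr '' C₂, ?_, ?_⟩
      · rw [sep_join_iff, hp1, hp2]
        exact ⟨sep_mono hC₁ (Set.subset_insert _ _), hC₂, fun ⟨ha, _⟩ => hnu ha⟩
      · rw [ncard_sum_split, hp1, hp2, Set.ncard_insert_of_notMem hvC, hc₁, hc₂]
        omega
    · obtain ⟨w, hw⟩ := huniv₂ C₂ hC₂ (fun S' hS' => le_trans (le_of_eq hc₂) (gammaS_le hS'))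
      obtain ⟨v, hv⟩ := hk w
      obtain ⟨hvC, hnu⟩ := breaker hC₂ hw hv
      have hp1 : Sum.inl ⁻¹' (Sum.inl '' C₁ ∪ Sum.inr '' insert v C₂) = C₁ := by
        ext c; simp
      have hp2 : Sum.inr ⁻¹' (Sum.inl '' C₁ ∪ Sum.inr '' insert v C₂) = insert v C₂ := by
        ext c; simp
      refine ⟨Sum.inl '' C₁ ∪ Sum.inr '' insert v C₂, ?_, ?_⟩
      · rw [sep_join_iff, hp1, hp2]
        exact ⟨hC₁, sep_mono hC₂ (Set.subset_insert _ _), fun ⟨_, hb⟩ => hnu hb⟩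
      · rw [ncard_sum_split, hp1, hp2, Set.ncard_insert_of_notMem hvC, hc₁, hc₂]
        omega
  obtain ⟨S₀, hS₀, hn₀⟩ := upper
  have hmem : gammaS G₁ + gammaS G₂ + 1 ∈
      {n | ∃ C : Set (V₁ ⊕ V₂), IsSeparating (joinG G₁ G₂) C ∧ C.ncard = n} := ⟨S₀, hS₀, hn₀⟩
  have hle : gammaS (joinG G₁ G₂) ≤ gammaS G₁ + gammaS G₂ + 1 := Nat.sInf_le hmem
  have hge : gammaS G₁ + gammaS G₂ + 1 ≤ gammaS (joinG G₁ G₂) := by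
    have hself : ∃ C : Set (V₁ ⊕ V₂), IsSeparating (joinG G₁ G₂) C ∧
        C.ncard = gammaS (joinG G₁ G₂) := Nat.sInf_mem ⟨_, hmem⟩
    obtain ⟨C, hC, hn⟩ := hself
    exact hn ▸ lower C hC
  refine ⟨le_antisymm hle hge, ?_⟩
  intro S hS hcard
  obtain ⟨h1, h2, h3⟩ := sep_join_iff.mp hS
  have hn := ncard_sum_split S
  have g1 : gammaS G₁ ≤ (Sum.inl ⁻¹' S).ncard := gammaS_le h1
  have g2 : gammaS G₂ ≤ (Sum.inr ⁻¹' S).ncard := gammaS_le h2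
  rcases (by omega : (Sum.inl ⁻¹' S).ncard = gammaS G₁ ∨ (Sum.inr ⁻¹' S).ncard = gammaS G₂)
    with e | e
  · obtain ⟨a, ha⟩ := huniv₁ _ h1 (fun S' hS' => le_trans (le_of_eq e) (gammaS_le hS'))
    refine ⟨Sum.inl a, ?_⟩
    rintro (c | c) hc
    · exact mem_ballJ_inl_inl.mpr (ha hc)
    · exact mem_ballJ_inl_inr
  · obtain ⟨b, hb⟩ := huniv₂ _ h2 (fun S' hS' => le_trans (le_of_eq e) (gammaS_le hS'))
    refine ⟨Sum.inr b, ?_⟩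
    rintro (c | c) hc
    · exact mem_ballJ_inr_inl
    · exact mem_ballJ_inr_inr.mpr (hb hc)
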